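/- arXiv:2411.15642 — 4 statements merged into one kernel-verified Lean document; each statement's English description precedes it below -/
import Mathlib

section
/- For any two elements φ, ψ of the centroid Γ(A) of a Zinbiel algebra A, the commutator [φ, ψ] = φ∘ψ − ψ∘φ is a central derivation of A. -/
/-- The commutator of two centroid elements of a Zinbiel algebra is a
central derivation. -/
theorem centroid_commutator_is_central_derivation {K : Type*} [Field K] {A : Type*}
    [AddCommGroup A] [Module K A] (mul : A →ₗ[K] A →ₗ[K] A)
    (zinbiel : ∀ a b c : A, mul (mul a b) c = mul a (mul b c) + mul a (mul c b))
    (φ ψ : Module.End K A)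
    (hφ : ∀ a b : A, φ (mul a b) = mul (φ a) b ∧ φ (mul a b) = mul a (φ b))
    (hψ : ∀ a b : A, ψ (mul a b) = mul (ψ a) b ∧ ψ (mul a b) = mul a (ψ b)) :
    ∀ a b : A, (φ ∘ₗ ψ - ψ ∘ₗ φ) (mul a b) = 0 ∧
      mul ((φ ∘ₗ ψ - ψ ∘ₗ φ) a) b = 0 ∧ mul a ((φ ∘ₗ ψ - ψ ∘ₗ φ) b) = 0 := by
  intro a b
  have key : φ (ψ (mul a b)) = ψ (φ (mul a b)) := by
    rw [(hψ a b).2, (hφ a (ψ b)).1, (hφ a b).1, (hψ (φ a) b).2]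
  refine ⟨?_, ?_, ?_⟩
  · simp only [LinearMap.sub_apply, LinearMap.comp_apply, key, sub_self]
  · simp only [LinearMap.sub_apply, LinearMap.comp_apply, map_sub, LinearMap.sub_apply]
    rw [← (hφ (ψ a) b).1, ← (hψ a b).1, ← (hψ (φ a) b).1, ← (hφ a b).1, key, sub_self]
  · simp only [LinearMap.sub_apply, LinearMap.comp_apply, map_sub]
    rw [← (hφ a (ψ b)).2, ← (hψ a b).2, ← (hψ a (φ b)).2, ← (hφ a b).2, key, sub_self]
end

section
/- If A = A₁ ⊕ A₂ is a direct sum of ideals of a Zinbiel algebra A, and the center of A is trivial, then every element of the centroid Γ(A) preserves both A₁ and A₂, so Γ(A) decomposes as Γ(A₁) ⊕ Γ(A₂) via restriction. -/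
/-- If `A = A₁ ⊕ A₂` is a direct sum of ideals of a Zinbiel algebra with trivial
center, then every centroid element preserves `A₁` and `A₂`, and the centroid
decomposes as `Γ(A₁) ⊕ Γ(A₂)` via restriction. -/
theorem centroid_decomposes {K : Type*} [Field K] {A : Type*}
    [AddCommGroup A] [Module K A] (mul : A →ₗ[K] A →ₗ[K] A)
    (zinbiel : ∀ a b c : A, mul (mul a b) c = mul a (mul b c) + mul a (mul c b))
    (A₁ A₂ : Submodule K A)
    (hI₁ : ∀ a : A, ∀ x ∈ A₁, mul a x ∈ A₁ ∧ mul x a ∈ A₁)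
    (hI₂ : ∀ a : A, ∀ x ∈ A₂, mul a x ∈ A₂ ∧ mul x a ∈ A₂)
    (hcompl : IsCompl A₁ A₂)
    (hcenter : ∀ x : A, (∀ a : A, mul x a = 0 ∧ mul a x = 0) → x = 0) :
    (∀ φ : Module.End K A,
        (∀ a b : A, φ (mul a b) = mul (φ a) b ∧ φ (mul a b) = mul a (φ b)) →
        (∀ x ∈ A₁, φ x ∈ A₁) ∧ (∀ x ∈ A₂, φ x ∈ A₂)) ∧
    ∃ e : {φ : Module.End K A //
            ∀ a b : A, φ (mul a b) = mul (φ a) b ∧ φ (mul a b) = mul a (φ b)} ≃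
          {ψ : Module.End K A₁ // ∀ x y z : A₁, (z : A) = mul (x : A) (y : A) →
              ((ψ z : A₁) : A) = mul ((ψ x : A₁) : A) (y : A) ∧
              ((ψ z : A₁) : A) = mul (x : A) ((ψ y : A₁) : A)} ×
          {ψ : Module.End K A₂ // ∀ x y z : A₂, (z : A) = mul (x : A) (y : A) →
              ((ψ z : A₂) : A) = mul ((ψ x : A₂) : A) (y : A) ∧
              ((ψ z : A₂) : A) = mul (x : A) ((ψ y : A₂) : A)},
      ∀ φ, (∀ x : A₁, (((e φ).1.1 x : A₁) : A) = φ.1 (x : A)) ∧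
           (∀ x : A₂, (((e φ).2.1 x : A₂) : A) = φ.1 (x : A)) := by
  have hdis : ∀ x : A, x ∈ A₁ → x ∈ A₂ → x = 0 := fun x h1 h2 =>
    (Submodule.disjoint_def.mp hcompl.disjoint) x h1 h2
  -- cross products vanish
  have hcross12 : ∀ x ∈ A₁, ∀ y ∈ A₂, mul x y = 0 := fun x hx y hy =>
    hdis _ (hI₁ y x hx).2 (hI₂ x y hy).1
  have hcross21 : ∀ x ∈ A₂, ∀ y ∈ A₁, mul x y = 0 := fun x hx y hy =>
    hdis _ (hI₁ x y hy).1 (hI₂ y x hx).2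
  set p₁ := A₁.linearProjOfIsCompl A₂ hcompl with hp₁
  set p₂ := A₂.linearProjOfIsCompl A₁ hcompl.symm with hp₂
  have hsum : ∀ x : A, (p₁ x : A) + (p₂ x : A) = x := fun x =>
    Submodule.projection_add_projection_eq_self hcompl x
  -- the key preservation fact
  have key : ∀ φ : Module.End K A,
      (∀ a b : A, φ (mul a b) = mul (φ a) b ∧ φ (mul a b) = mul a (φ b)) →
      (∀ x ∈ A₁, φ x ∈ A₁) ∧ (∀ x ∈ A₂, φ x ∈ A₂) := by
    intro φ hφ
    constructor
    · intro x hx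
      have hy2 : (p₂ (φ x) : A) = 0 := by
        apply hcenter
        intro a
        constructor
        · -- mul (p₂ (φ x)) a = 0
          have h1 : mul (φ x) a ∈ A₁ := by
            rw [← (hφ x a).1, (hφ x a).2]
            exact (hI₁ (φ a) x hx).2
          have h2 : mul (φ x) a = mul (p₁ (φ x) : A) a + mul (p₂ (φ x) : A) a := by
            conv_lhs => rw [← hsum (φ x)]
            simp [map_add]
          have h3 : mul (p₂ (φ x) : A) a ∈ A₁ := by
            have : mul (p₂ (φ x) : A) a = mul (φ x) a - mul (p₁ (φ x) : A) a := by
              rw [h2]; abel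
            rw [this]
            exact Submodule.sub_mem _ h1 (hI₁ a _ (p₁ (φ x)).2).2
          exact hdis _ h3 (hI₂ a _ (p₂ (φ x)).2).2
        · -- mul a (p₂ (φ x)) = 0
          have h1 : mul a (φ x) ∈ A₁ := by
            rw [← (hφ a x).2, (hφ a x).1]
            exact (hI₁ (φ a) x hx).1
          have h2 : mul a (φ x) = mul a (p₁ (φ x) : A) + mul a (p₂ (φ x) : A) := by
            conv_lhs => rw [← hsum (φ x)]
            simp [map_add]
          have h3 : mul a (p₂ (φ x) : A) ∈ A₁ := by
            have : mul a (p₂ (φ x) : A) = mul a (φ x) - mul a (p₁ (φ x) : A) := by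
              rw [h2]; abel
            rw [this]
            exact Submodule.sub_mem _ h1 (hI₁ a _ (p₁ (φ x)).2).1
          exact hdis _ h3 (hI₂ a _ (p₂ (φ x)).2).1
      have h4 : ((p₁ (φ x) : A)) ∈ A₁ := (p₁ (φ x)).2
      rw [← hsum (φ x), hy2, add_zero]; exact h4
    · intro x hx
      have hy1 : (p₁ (φ x) : A) = 0 := by
        apply hcenter
        intro a
        constructor
        · have h1 : mul (φ x) a ∈ A₂ := by
            rw [← (hφ x a).1, (hφ x a).2]
            exact (hI₂ (φ a) x hx).2
          have h2 : mul (φ x) a = mul (p₁ (φ x) : A) a + mul (p₂ (φ x) : A) a := by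
            conv_lhs => rw [← hsum (φ x)]
            simp [map_add]
          have h3 : mul (p₁ (φ x) : A) a ∈ A₂ := by
            have : mul (p₁ (φ x) : A) a = mul (φ x) a - mul (p₂ (φ x) : A) a := by
              rw [h2]; abel
            rw [this]
            exact Submodule.sub_mem _ h1 (hI₂ a _ (p₂ (φ x)).2).2
          exact hdis _ (hI₁ a _ (p₁ (φ x)).2).2 h3
        · have h1 : mul a (φ x) ∈ A₂ := by
            rw [← (hφ a x).2, (hφ a x).1]
            exact (hI₂ (φ a) x hx).1
          have h2 : mul a (φ x) = mul a (p₁ (φ x) : A) + mul a (p₂ (φ x) : A) := by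
            conv_lhs => rw [← hsum (φ x)]
            simp [map_add]
          have h3 : mul a (p₁ (φ x) : A) ∈ A₂ := by
            have : mul a (p₁ (φ x) : A) = mul a (φ x) - mul a (p₂ (φ x) : A) := by
              rw [h2]; abel
            rw [this]
            exact Submodule.sub_mem _ h1 (hI₂ a _ (p₂ (φ x)).2).1
          exact hdis _ (hI₁ a _ (p₁ (φ x)).2).1 h3
      have h4 : ((p₂ (φ x) : A)) ∈ A₂ := (p₂ (φ x)).2
      rw [← hsum (φ x), hy1, zero_add]; exact h4
  -- projections of elements of the ideals
  have hp11 : ∀ x : A, x ∈ A₁ → (p₁ x : A) = x := fun x hx =>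
    congrArg Subtype.val (Submodule.linearProjOfIsCompl_apply_left hcompl ⟨x, hx⟩)
  have hp12 : ∀ x : A, x ∈ A₂ → (p₁ x : A) = 0 := fun x hx =>
    congrArg Subtype.val (Submodule.linearProjOfIsCompl_apply_right' hcompl hx)
  have hp22 : ∀ x : A, x ∈ A₂ → (p₂ x : A) = x := fun x hx =>
    congrArg Subtype.val (Submodule.linearProjOfIsCompl_apply_left hcompl.symm ⟨x, hx⟩)
  have hp21 : ∀ x : A, x ∈ A₁ → (p₂ x : A) = 0 := fun x hx =>
    congrArg Subtype.val (Submodule.linearProjOfIsCompl_apply_right' hcompl.symm hx)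
  -- the multiplication splits
  have hmulsplit : ∀ a b : A,
      mul a b = mul (p₁ a : A) (p₁ b : A) + mul (p₂ a : A) (p₂ b : A) := by
    intro a b
    conv_lhs => rw [← hsum a, ← hsum b]
    simp only [map_add, LinearMap.add_apply]
    rw [hcross12 _ (p₁ a).2 _ (p₂ b).2, hcross21 _ (p₂ a).2 _ (p₁ b).2]
    abel
  have hproj1 : ∀ a b : A, ((p₁ (mul a b)) : A) = mul (p₁ a : A) (p₁ b : A) := by
    intro a b
    rw [hmulsplit a b, map_add, Submodule.coe_add,
      hp11 _ (hI₁ _ _ (p₁ b).2).1, hp12 _ (hI₂ _ _ (p₂ b).2).1, add_zero]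
  have hproj2 : ∀ a b : A, ((p₂ (mul a b)) : A) = mul (p₂ a : A) (p₂ b : A) := by
    intro a b
    rw [hmulsplit a b, map_add, Submodule.coe_add,
      hp21 _ (hI₁ _ _ (p₁ b).2).1, hp22 _ (hI₂ _ _ (p₂ b).2).1, zero_add]
  have hsplitL : ∀ u₁ ∈ A₁, ∀ u₂ ∈ A₂, ∀ b : A,
      mul (u₁ + u₂) b = mul u₁ (p₁ b : A) + mul u₂ (p₂ b : A) := by
    intro u₁ h₁ u₂ h₂ b
    rw [hmulsplit (u₁ + u₂) b, map_add, map_add, Submodule.coe_add, Submodule.coe_add,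
      hp11 _ h₁, hp12 _ h₂, hp21 _ h₁, hp22 _ h₂, add_zero, zero_add]
  have hsplitR : ∀ u₁ ∈ A₁, ∀ u₂ ∈ A₂, ∀ a : A,
      mul a (u₁ + u₂) = mul (p₁ a : A) u₁ + mul (p₂ a : A) u₂ := by
    intro u₁ h₁ u₂ h₂ a
    rw [hmulsplit a (u₁ + u₂), map_add, map_add, Submodule.coe_add, Submodule.coe_add,
      hp11 _ h₁, hp12 _ h₂, hp21 _ h₁, hp22 _ h₂, add_zero, zero_add]
  -- the restriction of a centroid element is a centroid element
  have hres1 : ∀ (φ : Module.End K A)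
      (hφ : ∀ a b : A, φ (mul a b) = mul (φ a) b ∧ φ (mul a b) = mul a (φ b))
      (hf : ∀ x ∈ A₁, φ x ∈ A₁),
      ∀ x y z : A₁, (z : A) = mul (x : A) (y : A) →
        ((φ.restrict hf z : A₁) : A) = mul ((φ.restrict hf x : A₁) : A) (y : A) ∧
        ((φ.restrict hf z : A₁) : A) = mul (x : A) ((φ.restrict hf y : A₁) : A) := by
    intro φ hφ hf x y z hz
    have hr : ∀ w : A₁, ((φ.restrict hf w : A₁) : A) = φ (w : A) := fun w => rfl
    rw [hr, hr, hr, hz]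
    exact ⟨(hφ x y).1, (hφ x y).2⟩
  have hres2 : ∀ (φ : Module.End K A)
      (hφ : ∀ a b : A, φ (mul a b) = mul (φ a) b ∧ φ (mul a b) = mul a (φ b))
      (hf : ∀ x ∈ A₂, φ x ∈ A₂),
      ∀ x y z : A₂, (z : A) = mul (x : A) (y : A) →
        ((φ.restrict hf z : A₂) : A) = mul ((φ.restrict hf x : A₂) : A) (y : A) ∧
        ((φ.restrict hf z : A₂) : A) = mul (x : A) ((φ.restrict hf y : A₂) : A) := by
    intro φ hφ hf x y z hz
    have hr : ∀ w : A₂, ((φ.restrict hf w : A₂) : A) = φ (w : A) := fun w => rfl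
    rw [hr, hr, hr, hz]
    exact ⟨(hφ x y).1, (hφ x y).2⟩
  -- the glueing of two centroid elements is a centroid element
  have hglue : ∀ (ψ₁ : Module.End K A₁)
      (h₁ : ∀ x y z : A₁, (z : A) = mul (x : A) (y : A) →
        ((ψ₁ z : A₁) : A) = mul ((ψ₁ x : A₁) : A) (y : A) ∧
        ((ψ₁ z : A₁) : A) = mul (x : A) ((ψ₁ y : A₁) : A))
      (ψ₂ : Module.End K A₂)
      (h₂ : ∀ x y z : A₂, (z : A) = mul (x : A) (y : A) →
        ((ψ₂ z : A₂) : A) = mul ((ψ₂ x : A₂) : A) (y : A) ∧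
        ((ψ₂ z : A₂) : A) = mul (x : A) ((ψ₂ y : A₂) : A)),
      ∀ a b : A,
        (A₁.subtype ∘ₗ ψ₁ ∘ₗ p₁ + A₂.subtype ∘ₗ ψ₂ ∘ₗ p₂) (mul a b)
          = mul ((A₁.subtype ∘ₗ ψ₁ ∘ₗ p₁ + A₂.subtype ∘ₗ ψ₂ ∘ₗ p₂) a) b ∧
        (A₁.subtype ∘ₗ ψ₁ ∘ₗ p₁ + A₂.subtype ∘ₗ ψ₂ ∘ₗ p₂) (mul a b)
          = mul a ((A₁.subtype ∘ₗ ψ₁ ∘ₗ p₁ + A₂.subtype ∘ₗ ψ₂ ∘ₗ p₂) b) := by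
    intro ψ₁ h₁ ψ₂ h₂ a b
    simp only [LinearMap.add_apply, LinearMap.comp_apply, Submodule.subtype_apply]
    constructor
    · rw [(h₁ (p₁ a) (p₁ b) (p₁ (mul a b)) (hproj1 a b)).1,
        (h₂ (p₂ a) (p₂ b) (p₂ (mul a b)) (hproj2 a b)).1,
        hsplitL _ (ψ₁ (p₁ a)).2 _ (ψ₂ (p₂ a)).2 b]
    · rw [(h₁ (p₁ a) (p₁ b) (p₁ (mul a b)) (hproj1 a b)).2,
        (h₂ (p₂ a) (p₂ b) (p₂ (mul a b)) (hproj2 a b)).2,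
        hsplitR _ (ψ₁ (p₁ b)).2 _ (ψ₂ (p₂ b)).2 a]
  refine ⟨key, ⟨⟨fun φ =>
      (⟨φ.1.restrict (fun x hx => (key φ.1 φ.2).1 x hx), hres1 φ.1 φ.2 _⟩,
       ⟨φ.1.restrict (fun x hx => (key φ.1 φ.2).2 x hx), hres2 φ.1 φ.2 _⟩),
    fun P => ⟨A₁.subtype ∘ₗ P.1.1 ∘ₗ p₁ + A₂.subtype ∘ₗ P.2.1 ∘ₗ p₂,
      hglue P.1.1 P.1.2 P.2.1 P.2.2⟩, ?_, ?_⟩, ?_⟩⟩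
  · -- left inverse
    rintro ⟨φ, hφ⟩
    apply Subtype.ext
    apply LinearMap.ext
    intro a
    simp only [LinearMap.add_apply, LinearMap.comp_apply, Submodule.subtype_apply]
    have hr1 : ((φ.restrict (fun x hx => (key φ hφ).1 x hx) (p₁ a) : A₁) : A)
        = φ (p₁ a : A) := rfl
    have hr2 : ((φ.restrict (fun x hx => (key φ hφ).2 x hx) (p₂ a) : A₂) : A)
        = φ (p₂ a : A) := rfl
    rw [hr1, hr2, ← map_add, hsum a]
  · -- right inverse
    rintro ⟨⟨ψ₁, h₁⟩, ⟨ψ₂, h₂⟩⟩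
    apply Prod.ext
    · apply Subtype.ext
      apply LinearMap.ext
      intro x
      apply Subtype.ext
      have hr : ∀ (f : Module.End K A) (hf : ∀ y ∈ A₁, f y ∈ A₁) (x : A₁),
          ((f.restrict hf x : A₁) : A) = f (x : A) := fun _ _ _ => rfl
      rw [hr]
      simp only [LinearMap.add_apply, LinearMap.comp_apply, Submodule.subtype_apply]
      have e1 : p₁ (x : A) = x := Submodule.linearProjOfIsCompl_apply_left hcompl x
      have e2 : p₂ (x : A) = 0 := Submodule.linearProjOfIsCompl_apply_right' hcompl.symm x.2
      rw [e1, e2, map_zero, Submodule.coe_zero, add_zero]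
    · apply Subtype.ext
      apply LinearMap.ext
      intro x
      apply Subtype.ext
      have hr : ∀ (f : Module.End K A) (hf : ∀ y ∈ A₂, f y ∈ A₂) (x : A₂),
          ((f.restrict hf x : A₂) : A) = f (x : A) := fun _ _ _ => rfl
      rw [hr]
      simp only [LinearMap.add_apply, LinearMap.comp_apply, Submodule.subtype_apply]
      have e1 : p₂ (x : A) = x := Submodule.linearProjOfIsCompl_apply_left hcompl.symm x
      have e2 : p₁ (x : A) = 0 := Submodule.linearProjOfIsCompl_apply_right' hcompl x.2
      rw [e1, e2, map_zero, Submodule.coe_zero, zero_add]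
  · -- the compatibility property
    intro φ
    exact ⟨fun x => rfl, fun x => rfl⟩
end

section
/- Let A = A₁ ⊕ A₂ with A₁, A₂ ideals of a Zinbiel algebra A, ρᵢ the projections, and φ in the centroid of A. Then for i ≠ j, the map ρᵢ ∘ φ ∘ ρⱼ restricted to Aⱼ takes values in the center of Aᵢ and annihilates Aⱼ • Aⱼ. -/
private lemma cross_aux {K : Type*} [Field K] {A : Type*}
    [AddCommGroup A] [Module K A] (mul : A →ₗ[K] A →ₗ[K] A)
    (A₁ A₂ : Submodule K A)
    (hI₁ : ∀ a : A, ∀ x ∈ A₁, mul a x ∈ A₁ ∧ mul x a ∈ A₁)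
    (hI₂ : ∀ a : A, ∀ x ∈ A₂, mul a x ∈ A₂ ∧ mul x a ∈ A₂)
    (hcompl : IsCompl A₁ A₂)
    (ρ₁ ρ₂ : Module.End K A)
    (hρ₁ : ρ₁ = A₁.subtype ∘ₗ Submodule.linearProjOfIsCompl A₁ A₂ hcompl)
    (hρ₂ : ρ₂ = A₂.subtype ∘ₗ Submodule.linearProjOfIsCompl A₂ A₁ hcompl.symm)
    (φ : Module.End K A)
    (hφ : ∀ a b : A, φ (mul a b) = mul (φ a) b ∧ φ (mul a b) = mul a (φ b)) :
    (∀ x ∈ A₂, (ρ₁ ∘ₗ φ ∘ₗ ρ₂) x ∈ A₁ ∧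
        (∀ z ∈ A₁, mul ((ρ₁ ∘ₗ φ ∘ₗ ρ₂) x) z = 0 ∧ mul z ((ρ₁ ∘ₗ φ ∘ₗ ρ₂) x) = 0)) ∧
    (∀ x ∈ A₂, ∀ y ∈ A₂, (ρ₁ ∘ₗ φ ∘ₗ ρ₂) (mul x y) = 0) := by
  -- basic projection facts
  have hρ₂id : ∀ x ∈ A₂, ρ₂ x = x := by
    intro x hx
    rw [hρ₂]
    exact congrArg Subtype.val
      (Submodule.linearProjOfIsCompl_apply_left hcompl.symm ⟨x, hx⟩)
  have hρ₁zero : ∀ x ∈ A₂, ρ₁ x = 0 := by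
    intro x hx
    rw [hρ₁]
    show A₁.subtype (Submodule.linearProjOfIsCompl A₁ A₂ hcompl x) = 0
    erw [Submodule.projectionOnto_apply_of_mem_right hcompl hx]
    simp
  have hρ₁mem : ∀ x : A, ρ₁ x ∈ A₁ := by
    intro x; rw [hρ₁]; exact (Submodule.linearProjOfIsCompl A₁ A₂ hcompl x).2
  have hρ₁sub : ∀ x : A, x - ρ₁ x ∈ A₂ := by
    intro x
    have := Submodule.projection_add_projection_eq_self hcompl x
    have h2 : x - ρ₁ x = (A₂.linearProjOfIsCompl A₁ hcompl.symm x : A) := by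
      rw [hρ₁]
      show x - (A₁.linearProjOfIsCompl A₂ hcompl x : A) = _
      exact sub_eq_of_eq_add' this.symm
    rw [h2]; exact (A₂.linearProjOfIsCompl A₁ hcompl.symm x).2
  -- products across the two ideals vanish
  have hzero : ∀ x ∈ A₁, ∀ y ∈ A₂, mul x y = 0 ∧ mul y x = 0 := by
    intro x hx y hy
    constructor
    · exact Submodule.disjoint_def.mp hcompl.disjoint _ (hI₁ y x hx).2 (hI₂ x y hy).1
    · exact Submodule.disjoint_def.mp hcompl.disjoint _ (hI₁ y x hx).1 (hI₂ x y hy).2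
  constructor
  · intro x hx
    refine ⟨hρ₁mem _, ?_⟩
    intro z hz
    have key : ∀ w : A, mul (ρ₁ (φ w)) z = 0 ∧ mul z (ρ₁ (φ w)) = 0 → True := fun _ _ => trivial
    -- φ x ∈ A, ρ₁ (φ x) = φ x - (φ x - ρ₁ (φ x)), with φ x - ρ₁(φ x) ∈ A₂
    have hx2 : (ρ₁ ∘ₗ φ ∘ₗ ρ₂) x = ρ₁ (φ x) := by
      simp [LinearMap.comp_apply, hρ₂id x hx]
    rw [hx2]
    have hdiff := hρ₁sub (φ x)
    have e1 : mul (φ x) z = 0 := by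
      have : mul (φ x) z = φ (mul x z) := ((hφ x z).1).symm
      rw [this]
      have hxz : mul x z = 0 := (hzero z hz x hx).2
      rw [hxz]; simp
    have e2 : mul z (φ x) = 0 := by
      have : mul z (φ x) = φ (mul z x) := ((hφ z x).2).symm
      rw [this]
      have hxz : mul z x = 0 := (hzero z hz x hx).1
      rw [hxz]; simp
    have e3 : mul (φ x - ρ₁ (φ x)) z = 0 := (hzero z hz _ hdiff).2
    have e4 : mul z (φ x - ρ₁ (φ x)) = 0 := (hzero z hz _ hdiff).1
    constructor
    · have : mul (ρ₁ (φ x)) z = mul (φ x) z - mul (φ x - ρ₁ (φ x)) z := by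
        simp [map_sub, LinearMap.sub_apply]
      rw [this, e1, e3]; simp
    · have : mul z (ρ₁ (φ x)) = mul z (φ x) - mul z (φ x - ρ₁ (φ x)) := by
        simp [map_sub]
      rw [this, e2, e4]; simp
  · intro x hx y hy
    have hxy : mul x y ∈ A₂ := (hI₂ x y hy).1
    have h1 : (ρ₁ ∘ₗ φ ∘ₗ ρ₂) (mul x y) = ρ₁ (φ (mul x y)) := by
      simp [LinearMap.comp_apply, hρ₂id _ hxy]
    rw [h1, (hφ x y).1]
    exact hρ₁zero _ (hI₂ (φ x) y hy).1


/-- For `A = A₁ ⊕ A₂` a direct sum of ideals of a Zinbiel algebra and `φ` in the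
centroid, the map `ρᵢ ∘ φ ∘ ρⱼ` (`i ≠ j`) restricted to `Aⱼ` takes values in the
center of `Aᵢ` and annihilates `Aⱼ • Aⱼ`. -/
theorem cross_component_maps_central {K : Type*} [Field K] {A : Type*}
    [AddCommGroup A] [Module K A] (mul : A →ₗ[K] A →ₗ[K] A)
    (zinbiel : ∀ a b c : A, mul (mul a b) c = mul a (mul b c) + mul a (mul c b))
    (A₁ A₂ : Submodule K A)
    (hI₁ : ∀ a : A, ∀ x ∈ A₁, mul a x ∈ A₁ ∧ mul x a ∈ A₁)
    (hI₂ : ∀ a : A, ∀ x ∈ A₂, mul a x ∈ A₂ ∧ mul x a ∈ A₂)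
    (hcompl : IsCompl A₁ A₂)
    (ρ₁ ρ₂ : Module.End K A)
    (hρ₁ : ρ₁ = A₁.subtype ∘ₗ Submodule.linearProjOfIsCompl A₁ A₂ hcompl)
    (hρ₂ : ρ₂ = A₂.subtype ∘ₗ Submodule.linearProjOfIsCompl A₂ A₁ hcompl.symm)
    (φ : Module.End K A)
    (hφ : ∀ a b : A, φ (mul a b) = mul (φ a) b ∧ φ (mul a b) = mul a (φ b)) :
    (∀ x ∈ A₂, (ρ₁ ∘ₗ φ ∘ₗ ρ₂) x ∈ A₁ ∧
        (∀ z ∈ A₁, mul ((ρ₁ ∘ₗ φ ∘ₗ ρ₂) x) z = 0 ∧ mul z ((ρ₁ ∘ₗ φ ∘ₗ ρ₂) x) = 0)) ∧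
    (∀ x ∈ A₂, ∀ y ∈ A₂, (ρ₁ ∘ₗ φ ∘ₗ ρ₂) (mul x y) = 0) ∧
    (∀ x ∈ A₁, (ρ₂ ∘ₗ φ ∘ₗ ρ₁) x ∈ A₂ ∧
        (∀ z ∈ A₂, mul ((ρ₂ ∘ₗ φ ∘ₗ ρ₁) x) z = 0 ∧ mul z ((ρ₂ ∘ₗ φ ∘ₗ ρ₁) x) = 0)) ∧
    (∀ x ∈ A₁, ∀ y ∈ A₁, (ρ₂ ∘ₗ φ ∘ₗ ρ₁) (mul x y) = 0) := by
  obtain ⟨h1, h2⟩ := cross_aux mul A₁ A₂ hI₁ hI₂ hcompl ρ₁ ρ₂ hρ₁ hρ₂ φ hφ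
  obtain ⟨h3, h4⟩ := cross_aux mul A₂ A₁ hI₂ hI₁ hcompl.symm ρ₂ ρ₁ hρ₂ hρ₁ φ hφ
  exact ⟨h1, h2, h3, h4⟩
end

section
/- Consider the 2-dimensional complex Zinbiel algebra A with basis {e₁, e₂} and multiplication e₁ • e₁ = e₂ (all other basis products zero). Then the space of central derivations of A is exactly the set of linear maps φ with φ(e₁) = c·e₂ and φ(e₂) = 0 for a scalar c; in particular, CD(A) is 1-dimensional. -/
/-- The submodule of central derivations of an algebra with product `mul`. -/
def centralDerivations {K A : Type*} [Field K] [AddCommGroup A] [Module K A]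
    (mul : A →ₗ[K] A →ₗ[K] A) : Submodule K (Module.End K A) where
  carrier := {φ | ∀ a b : A, φ (mul a b) = 0 ∧ mul (φ a) b = 0 ∧ mul a (φ b) = 0}
  add_mem' := by
    intro φ ψ hφ hψ a b
    obtain ⟨h1, h2, h3⟩ := hφ a b
    obtain ⟨g1, g2, g3⟩ := hψ a b
    refine ⟨?_, ?_, ?_⟩ <;>
      simp [LinearMap.add_apply, h1, g1, h2, g2, h3, g3, map_add]
  zero_mem' := by intro a b; simp
  smul_mem' := by
    intro c φ hφ a b
    obtain ⟨h1, h2, h3⟩ := hφ a b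
    refine ⟨?_, ?_, ?_⟩ <;>
      simp [LinearMap.smul_apply, h1, h2, h3, map_smul]

/-- For the 2-dimensional complex Zinbiel algebra with `e₁ • e₁ = e₂` and all
other basis products zero, the product is Zinbiel, the central derivations are
exactly the maps `φ(e₁) = c • e₂`, `φ(e₂) = 0`, and `CD(A)` is 1-dimensional. -/
theorem central_derivations_dim_two_algebra
    (mul : (Fin 2 → ℂ) →ₗ[ℂ] (Fin 2 → ℂ) →ₗ[ℂ] (Fin 2 → ℂ))
    (e : Fin 2 → (Fin 2 → ℂ)) (he : ∀ i, e i = Pi.single i 1)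
    (h00 : mul (e 0) (e 0) = e 1)
    (hzero : ∀ i j : Fin 2, ¬(i = 0 ∧ j = 0) → mul (e i) (e j) = 0) :
    (∀ a b c, mul (mul a b) c = mul a (mul b c) + mul a (mul c b)) ∧
    ((centralDerivations mul : Set (Module.End ℂ (Fin 2 → ℂ))) =
      {φ | ∃ c : ℂ, φ (e 0) = c • e 1 ∧ φ (e 1) = 0}) ∧
    Module.finrank ℂ (centralDerivations mul) = 1 := by
  have h01 : mul (e 0) (e 1) = 0 := hzero 0 1 (by simp)
  have h10 : mul (e 1) (e 0) = 0 := hzero 1 0 (by simp)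
  have h11 : mul (e 1) (e 1) = 0 := hzero 1 1 (by simp)
  have he10 : e 1 0 = 0 := by rw [he]; simp
  have he1ne : e 1 ≠ 0 := by
    rw [he]; intro h
    have := congrFun h 1
    simp at this
  have hx : ∀ x : Fin 2 → ℂ, x = x 0 • e 0 + x 1 • e 1 := by
    intro x
    funext i
    fin_cases i <;> simp [he, Pi.single_apply]
  have hmul : ∀ x y : Fin 2 → ℂ, mul x y = (x 0 * y 0) • e 1 := by
    intro x y
    conv_lhs => rw [hx x, hx y]
    simp [map_add, map_smul, h00, h01, h10, h11, smul_smul, mul_comm]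
  refine ⟨?_, ?_, ?_⟩
  · intro a b c
    simp [hmul, he10]
  · ext φ
    constructor
    · intro hφ
      obtain ⟨h1, h2, h3⟩ := hφ (e 0) (e 0)
      refine ⟨(φ (e 0)) 1, ?_, ?_⟩
      · rw [hmul] at h2
        have h0 : (φ (e 0)) 0 = 0 := by
          have he00 : (e 0) 0 = 1 := by rw [he]; simp
          rw [he00, mul_one] at h2
          rcases smul_eq_zero.mp h2 with h | h
          · exact h
          · exact absurd h he1ne
        conv_lhs => rw [hx (φ (e 0))]
        rw [h0]
        simp
      · rw [h00] at h1
        exact h1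
    · rintro ⟨c, hc0, hc1⟩ a b
      have hφ : ∀ x : Fin 2 → ℂ, φ x = (x 0 * c) • e 1 := by
        intro x
        conv_lhs => rw [hx x]
        rw [map_add, map_smul, map_smul, hc0, hc1, smul_smul, smul_zero, add_zero,
          mul_comm]
      refine ⟨?_, ?_, ?_⟩
      · simp [hmul, hφ, he10]
      · simp [hmul, hφ, he10]
      · simp [hmul, hφ, he10]
  · have hD : centralDerivations mul = Submodule.span ℂ
        {(LinearMap.proj 0 : (Fin 2 → ℂ) →ₗ[ℂ] ℂ).smulRight (e 1)} := by
      set D : Module.End ℂ (Fin 2 → ℂ) :=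
        (LinearMap.proj 0 : (Fin 2 → ℂ) →ₗ[ℂ] ℂ).smulRight (e 1) with hDdef
      have hDapp : ∀ x, D x = x 0 • e 1 := fun x => rfl
      apply le_antisymm
      · intro φ hφ
        obtain ⟨h1, h2, h3⟩ := hφ (e 0) (e 0)
        -- φ(e0) 0 = 0 from h2, φ(e1) = 0 from h1
        rw [hmul] at h2
        have h0 : (φ (e 0)) 0 = 0 := by
          have he00 : (e 0) 0 = 1 := by rw [he]; simp
          rw [he00, mul_one] at h2
          rcases smul_eq_zero.mp h2 with h | h
          · exact h
          · exact absurd h he1ne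
        rw [h00] at h1
        rw [Submodule.mem_span_singleton]
        refine ⟨(φ (e 0)) 1, ?_⟩
        apply LinearMap.ext
        intro x
        conv_rhs => rw [hx x]
        rw [map_add, map_smul, map_smul, h1, smul_zero, add_zero]
        rw [LinearMap.smul_apply, hDapp]
        conv_rhs => rw [hx (φ (e 0))]
        rw [h0]
        simp [smul_smul, mul_comm]
      · rw [Submodule.span_le, Set.singleton_subset_iff]
        intro a b
        refine ⟨?_, ?_, ?_⟩
        · simp [hmul, hDapp, he10]
        · simp [hmul, hDapp, he10]
        · simp [hmul, hDapp, he10]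
    rw [hD]
    rw [finrank_span_singleton]
    intro h
    apply he1ne
    have := LinearMap.congr_fun h (e 0)
    have he00 : (e 0) 0 = 1 := by rw [he]; simp
    simpa [LinearMap.smulRight_apply, he00] using this
end
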